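/- (Discrete gradient bound for the sample covariance.) For every z ∈ G, ∑_{i : z_i = 1} ∑_{j : z_j = 0} (s_{ab}(z) − s_{ab}(z^{i,j}))² ≤ σ²_cov, where σ_cov = sqrt( (e_c² n)⁻¹ ∑_{i=1}^n (a_i − ā)²(b_i − b̄)² ) + sqrt( 8 (e_c³ n²)⁻¹ ∑_{i=1}^n (a_i − ā)² · ∑_{i=1}^n (b_i − b̄)² ). -/

import Mathlib

open Finset

section GradCovAux

lemma pair_sum_expand {α : Type*} (s t : Finset α) (x y : α → ℝ) :
    ∑ i ∈ s, ∑ j ∈ t, (x i - y j)^2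
      = (t.card : ℝ) * ∑ i ∈ s, x i^2 - 2*(∑ i ∈ s, x i)*(∑ j ∈ t, y j)
        + (s.card : ℝ) * ∑ j ∈ t, y j^2 := by
  have h1 : ∀ i, ∑ j ∈ t, (x i - y j)^2
      = (t.card : ℝ) * x i^2 - 2 * x i * (∑ j ∈ t, y j) + ∑ j ∈ t, y j^2 := by
    intro i
    have h : ∀ j, (x i - y j)^2 = x i^2 - 2*x i*y j + y j^2 := by intro j; ring
    simp only [h, Finset.sum_add_distrib, Finset.sum_sub_distrib, Finset.sum_const,
      mul_assoc, ← Finset.mul_sum, nsmul_eq_mul]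
  simp only [h1, Finset.sum_add_distrib, Finset.sum_sub_distrib, Finset.sum_const,
    nsmul_eq_mul, Finset.sum_mul, Finset.mul_sum]
  rw [Finset.sum_comm]

lemma minkowski_sq {α : Type*} (s : Finset α) (u v : α → ℝ) :
    ∑ i ∈ s, (u i + v i)^2
      ≤ (Real.sqrt (∑ i ∈ s, u i^2) + Real.sqrt (∑ i ∈ s, v i^2))^2 := by
  have hU : (0:ℝ) ≤ ∑ i ∈ s, u i^2 := Finset.sum_nonneg fun i _ => sq_nonneg _
  have hV : (0:ℝ) ≤ ∑ i ∈ s, v i^2 := Finset.sum_nonneg fun i _ => sq_nonneg _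
  have hcs : (∑ i ∈ s, u i * v i)^2 ≤ (∑ i ∈ s, u i^2) * ∑ i ∈ s, v i^2 :=
    Finset.sum_mul_sq_le_sq_mul_sq s u v
  have key : ∑ i ∈ s, u i * v i ≤ Real.sqrt (∑ i ∈ s, u i^2) * Real.sqrt (∑ i ∈ s, v i^2) := by
    rcases le_or_gt (∑ i ∈ s, u i * v i) 0 with h | h
    · exact h.trans (mul_nonneg (Real.sqrt_nonneg _) (Real.sqrt_nonneg _))
    · rw [← Real.sqrt_mul hU]
      exact (Real.le_sqrt h.le (mul_nonneg hU hV)).mpr hcs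
  have expand : ∑ i ∈ s, (u i + v i)^2
      = ∑ i ∈ s, u i^2 + 2 * ∑ i ∈ s, u i * v i + ∑ i ∈ s, v i^2 := by
    simp only [add_sq, Finset.sum_add_distrib, mul_assoc, ← Finset.mul_sum]
  rw [expand, add_sq, Real.sq_sqrt hU, Real.sq_sqrt hV]
  nlinarith [key]

lemma subset_sum_sq {n : ℕ} (f : Fin n → ℝ) (h0 : ∑ i, f i = 0) (B : Finset (Fin n)) :
    (n : ℝ) * (∑ i ∈ B, f i)^2 ≤ (B.card : ℝ) * ((n : ℝ) - B.card) * ∑ i, f i^2 := by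
  have hsplit := Finset.sum_add_sum_compl B f
  have hsq : (∑ i ∈ B, f i)^2 ≤ (B.card : ℝ) * ∑ i ∈ B, f i^2 := sq_sum_le_card_mul_sum_sq
  have hsq' : (∑ i ∈ Bᶜ, f i)^2 ≤ (Bᶜ.card : ℝ) * ∑ i ∈ Bᶜ, f i^2 := sq_sum_le_card_mul_sum_sq
  have hBle : B.card ≤ n := by
    have := Finset.card_le_card (Finset.subset_univ B); simpa using this
  have hcard : (Bᶜ.card : ℝ) = (n : ℝ) - B.card := by
    have h := Finset.card_compl B
    simp only [Fintype.card_fin] at h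
    rw [h, Nat.cast_sub hBle]
  have h2 : ∑ i ∈ B, f i ^ 2 + ∑ i ∈ Bᶜ, f i ^ 2 = ∑ i, f i ^ 2 :=
    Finset.sum_add_sum_compl B (fun i => f i ^ 2)
  have hneg : ∑ i ∈ Bᶜ, f i = -∑ i ∈ B, f i := by
    rw [h0] at hsplit; linarith
  rw [hneg, hcard, neg_sq] at hsq'
  have hBn : (0:ℝ) ≤ (B.card : ℝ) := by positivity
  have k1 : ((n:ℝ) - B.card) * (∑ i ∈ B, f i)^2
      ≤ ((n:ℝ) - B.card) * ((B.card : ℝ) * ∑ i ∈ B, f i^2) :=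
    mul_le_mul_of_nonneg_left hsq (by
      have : (B.card : ℝ) ≤ (n:ℝ) := by exact_mod_cast hBle
      linarith)
  have k2 : (B.card : ℝ) * (∑ i ∈ B, f i)^2
      ≤ (B.card : ℝ) * (((n:ℝ) - B.card) * ∑ i ∈ Bᶜ, f i^2) :=
    mul_le_mul_of_nonneg_left hsq' hBn
  calc (n:ℝ) * (∑ i ∈ B, f i)^2
      = ((n:ℝ) - B.card) * (∑ i ∈ B, f i)^2 + (B.card : ℝ) * (∑ i ∈ B, f i)^2 := by ring
    _ ≤ ((n:ℝ) - B.card) * ((B.card : ℝ) * ∑ i ∈ B, f i^2)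
        + (B.card : ℝ) * (((n:ℝ) - B.card) * ∑ i ∈ Bᶜ, f i^2) := add_le_add k1 k2
    _ = (B.card : ℝ) * ((n:ℝ) - B.card) * (∑ i ∈ B, f i^2 + ∑ i ∈ Bᶜ, f i^2) := by ring
    _ = (B.card : ℝ) * ((n:ℝ) - B.card) * ∑ i, f i^2 := by rw [h2]

lemma sum_sub_const_sq {n : ℕ} (g : Fin n → ℝ) (h0 : ∑ i, g i = 0) (c : ℝ) :
    ∑ j, (g j - c)^2 = ∑ j, g j^2 + (n:ℝ)*c^2 := by
  have h : ∀ j, (g j - c)^2 = g j^2 - (2*c)*g j + c^2 := by intro j; ring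
  simp only [h, Finset.sum_add_distrib, Finset.sum_sub_distrib, ← Finset.mul_sum, h0,
    Finset.sum_const, Finset.card_univ, Fintype.card_fin, nsmul_eq_mul]
  ring

lemma cov_sum_eq {α : Type*} (B : Finset α) (f g : α → ℝ) (m : ℝ)
    (hm : (B.card : ℝ) = m) (hm0 : m ≠ 0) :
    ∑ i ∈ B, (f i - (∑ k ∈ B, f k)/m) * (g i - (∑ k ∈ B, g k)/m)
      = ∑ i ∈ B, f i * g i - (∑ k ∈ B, f k)*(∑ k ∈ B, g k)/m := by
  have h : ∀ i, (f i - (∑ k ∈ B, f k)/m) * (g i - (∑ k ∈ B, g k)/m)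
      = f i * g i - ((∑ k ∈ B, g k)/m) * f i - ((∑ k ∈ B, f k)/m) * g i
        + ((∑ k ∈ B, f k)/m) * ((∑ k ∈ B, g k)/m) := by intro i; ring
  simp only [h, Finset.sum_add_distrib, Finset.sum_sub_distrib, ← Finset.mul_sum,
    Finset.sum_const, nsmul_eq_mul, hm]
  field_simp
  ring

lemma center_shift {α : Type*} (B : Finset α) (a : α → ℝ) (c m : ℝ)
    (hm : (B.card : ℝ) = m) (hm0 : m ≠ 0) (i : α) :
    a i - (∑ k ∈ B, a k)/m = (a i - c) - (∑ k ∈ B, (a k - c))/m := by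
  rw [Finset.sum_sub_distrib, Finset.sum_const, nsmul_eq_mul, hm]
  field_simp
  ring

/-- Core bound for one of the two remainder pieces. -/
lemma grad_cov_aux {n n₁ : ℕ} (A : Finset (Fin n)) (hA : A.card = n₁)
    (f g : Fin n → ℝ) (hf0 : ∑ i, f i = 0) (hg0 : ∑ i, g i = 0)
    (hn₁ : 2 ≤ n₁) (hn₁' : n₁ + 1 ≤ n) :
    (n₁:ℝ) * ∑ i ∈ A, ∑ j ∈ Aᶜ, ((∑ k ∈ A, f k - f i) * (g j - g i))^2
      ≤ 2*(n:ℝ)*((n₁:ℝ)-1)^2 * ((∑ i, f i^2) * ∑ i, g i^2) := by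
  set m : ℝ := (n₁ : ℝ) with hm_def
  set N : ℝ := (n : ℝ) with hN_def
  set F : ℝ := ∑ i, f i^2 with hF_def
  set G : ℝ := ∑ i, g i^2 with hG_def
  have hm2 : (2:ℝ) ≤ m := by simp only [hm_def]; exact_mod_cast hn₁
  have hq1 : 1 ≤ N - m := by
    have : (n₁:ℝ) + 1 ≤ (n:ℝ) := by exact_mod_cast hn₁'
    simp only [hm_def, hN_def]; linarith
  have hN0 : (0:ℝ) < N := by linarith
  have hF0 : 0 ≤ F := Finset.sum_nonneg fun i _ => sq_nonneg _
  have hG0 : 0 ≤ G := Finset.sum_nonneg fun i _ => sq_nonneg _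
  have hcardA : (A.card : ℝ) = m := by rw [hA]
  -- inner sums bound
  have hV : ∀ i, ∑ j ∈ Aᶜ, (g j - g i)^2 ≤ N * g i^2 + G := by
    intro i
    have h1 : ∑ j ∈ Aᶜ, (g j - g i)^2 ≤ ∑ j, (g j - g i)^2 :=
      Finset.sum_le_sum_of_subset_of_nonneg (Finset.subset_univ _)
        (fun j _ _ => sq_nonneg _)
    have h2 : ∑ j, (g j - g i)^2 = G + N * g i^2 := sum_sub_const_sq g hg0 (g i)
    linarith
  -- pointwise bound on N * u_i^2
  have hU : ∀ i ∈ A, N * (∑ k ∈ A, f k - f i)^2 ≤ (m-1)*(N-m+1)*F := by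
    intro i hi
    have hrw : ∑ k ∈ A, f k - f i = ∑ k ∈ A.erase i, f k :=
      (Finset.sum_erase_eq_sub hi).symm
    have hce : ((A.erase i).card : ℝ) = m - 1 := by
      rw [Finset.card_erase_of_mem hi, hA, Nat.cast_sub (by omega)]
      simp [hm_def]
    have := subset_sum_sq f hf0 (A.erase i)
    rw [hce] at this
    rw [hrw]
    calc N * (∑ k ∈ A.erase i, f k)^2 ≤ (m-1)*(N-(m-1))*F := this
      _ = (m-1)*(N-m+1)*F := by ring
  -- exact expansion of sum of u_i^2
  have hsumU : ∑ i ∈ A, (∑ k ∈ A, f k - f i)^2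
      = (m-2)*(∑ k ∈ A, f k)^2 + ∑ i ∈ A, f i^2 := by
    have h : ∀ i, (∑ k ∈ A, f k - f i)^2
        = (∑ k ∈ A, f k)^2 - (2*(∑ k ∈ A, f k))*f i + f i^2 := by intro i; ring
    simp only [h, Finset.sum_add_distrib, Finset.sum_sub_distrib, ← Finset.mul_sum,
      Finset.sum_const, nsmul_eq_mul, hcardA]
    ring
  set Sf : ℝ := ∑ k ∈ A, f k with hSf_def
  set SA : ℝ := ∑ i ∈ A, (Sf - f i)^2 * g i^2 with hSA_def
  set SB : ℝ := ∑ i ∈ A, (Sf - f i)^2 with hSB_def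
  -- step 1: rewrite double sum
  have step1 : ∑ i ∈ A, ∑ j ∈ Aᶜ, ((Sf - f i) * (g j - g i))^2
      = ∑ i ∈ A, (Sf - f i)^2 * ∑ j ∈ Aᶜ, (g j - g i)^2 := by
    refine Finset.sum_congr rfl fun i _ => ?_
    rw [Finset.mul_sum]
    refine Finset.sum_congr rfl fun j _ => ?_
    ring
  have step2 : ∑ i ∈ A, (Sf - f i)^2 * ∑ j ∈ Aᶜ, (g j - g i)^2
      ≤ ∑ i ∈ A, (Sf - f i)^2 * (N * g i^2 + G) :=
    Finset.sum_le_sum fun i _ => mul_le_mul_of_nonneg_left (hV i) (sq_nonneg _)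
  have step3 : ∑ i ∈ A, (Sf - f i)^2 * (N * g i^2 + G) = N * SA + SB * G := by
    simp only [hSA_def, hSB_def, Finset.mul_sum, Finset.sum_mul]
    rw [← Finset.sum_add_distrib]
    refine Finset.sum_congr rfl fun i _ => ?_
    ring
  -- bound N * SA
  have key2 : N * SA ≤ (m-1)*(N-m+1)*(F*G) := by
    have : N * SA = ∑ i ∈ A, (N*(Sf - f i)^2) * g i^2 := by
      rw [hSA_def, Finset.mul_sum]
      exact Finset.sum_congr rfl fun i _ => by ring
    rw [this]
    calc ∑ i ∈ A, (N*(Sf - f i)^2) * g i^2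
        ≤ ∑ i ∈ A, ((m-1)*(N-m+1)*F) * g i^2 :=
          Finset.sum_le_sum fun i hi => mul_le_mul_of_nonneg_right (hU i hi) (sq_nonneg _)
      _ = ((m-1)*(N-m+1)*F) * ∑ i ∈ A, g i^2 := by rw [← Finset.mul_sum]
      _ ≤ ((m-1)*(N-m+1)*F) * G := by
          refine mul_le_mul_of_nonneg_left ?_ (mul_nonneg (mul_nonneg (by linarith) (by linarith)) hF0)
          exact Finset.sum_le_sum_of_subset_of_nonneg (Finset.subset_univ _)
            (fun j _ _ => sq_nonneg _)
      _ = (m-1)*(N-m+1)*(F*G) := by ring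
  -- bound N * SB
  have key3 : N * SB ≤ ((m-2)*(m*(N-m)) + N)*F := by
    have hSf2 : N * Sf^2 ≤ m*(N-m)*F := by
      have := subset_sum_sq f hf0 A
      rwa [hcardA] at this
    have hAF : ∑ i ∈ A, f i^2 ≤ F :=
      Finset.sum_le_sum_of_subset_of_nonneg (Finset.subset_univ _)
        (fun j _ _ => sq_nonneg _)
    rw [hsumU]
    have h1 : (m-2) * (N * Sf^2) ≤ (m-2) * (m*(N-m)*F) :=
      mul_le_mul_of_nonneg_left hSf2 (by linarith)
    have h2 : N * ∑ i ∈ A, f i^2 ≤ N * F := mul_le_mul_of_nonneg_left hAF (le_of_lt hN0)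
    calc N * ((m-2)*Sf^2 + ∑ i ∈ A, f i^2)
        = (m-2)*(N*Sf^2) + N * ∑ i ∈ A, f i^2 := by ring
      _ ≤ (m-2)*(m*(N-m)*F) + N*F := add_le_add h1 h2
      _ = ((m-2)*(m*(N-m)) + N)*F := by ring
  -- polynomial inequality
  have d5 : m*(N*((m-1)*(N-m+1)) + ((m-2)*(m*(N-m)) + N)) ≤ 2*N^2*(m-1)^2 := by
    nlinarith [sq_nonneg (m-2), sq_nonneg (N-m-1),
      mul_nonneg (sub_nonneg.mpr hm2) (sub_nonneg.mpr hq1), sq_nonneg ((m-2)*(N-m-1)),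
      mul_nonneg (mul_nonneg (sub_nonneg.mpr hm2) (sub_nonneg.mpr hq1)) (sub_nonneg.mpr hq1),
      mul_nonneg (mul_nonneg (sub_nonneg.mpr hm2) (sub_nonneg.mpr hm2)) (sub_nonneg.mpr hq1)]
  -- combine
  have hT : ∑ i ∈ A, ∑ j ∈ Aᶜ, ((Sf - f i) * (g j - g i))^2 ≤ N * SA + SB * G := by
    rw [step1, ← step3]; exact step2
  have hFG : 0 ≤ F * G := mul_nonneg hF0 hG0
  -- m * T ≤ 2*N*(m-1)^2*(F*G) via multiplying by N
  have hmain : N * (m * ∑ i ∈ A, ∑ j ∈ Aᶜ, ((Sf - f i) * (g j - g i))^2)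
      ≤ N * (2*N*(m-1)^2 * (F*G)) := by
    have hm0 : (0:ℝ) ≤ m := by linarith
    have c1 : N * (m * ∑ i ∈ A, ∑ j ∈ Aᶜ, ((Sf - f i) * (g j - g i))^2)
        ≤ m * (N * (N*SA + SB*G)) := by
      have := mul_le_mul_of_nonneg_left hT (mul_nonneg hm0 (le_of_lt hN0))
      calc N * (m * ∑ i ∈ A, ∑ j ∈ Aᶜ, ((Sf - f i) * (g j - g i))^2)
          = (m*N) * ∑ i ∈ A, ∑ j ∈ Aᶜ, ((Sf - f i) * (g j - g i))^2 := by ring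
        _ ≤ (m*N) * (N*SA + SB*G) := this
        _ = m * (N * (N*SA + SB*G)) := by ring
    have c2 : N * (N*SA + SB*G) ≤ N*((m-1)*(N-m+1)*(F*G)) + ((m-2)*(m*(N-m)) + N)*F*G := by
      have e1 : N * (N*SA + SB*G) = N*(N*SA) + (N*SB)*G := by ring
      rw [e1]
      refine add_le_add (mul_le_mul_of_nonneg_left key2 (le_of_lt hN0)) ?_
      calc (N*SB)*G ≤ (((m-2)*(m*(N-m)) + N)*F)*G :=
            mul_le_mul_of_nonneg_right key3 hG0
        _ = ((m-2)*(m*(N-m)) + N)*F*G := by ring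
    have c3 : m * (N*((m-1)*(N-m+1)*(F*G)) + ((m-2)*(m*(N-m)) + N)*F*G)
        ≤ (2*N^2*(m-1)^2) * (F*G) := by
      have : m * (N*((m-1)*(N-m+1)*(F*G)) + ((m-2)*(m*(N-m)) + N)*F*G)
          = (m*(N*((m-1)*(N-m+1)) + ((m-2)*(m*(N-m)) + N))) * (F*G) := by ring
      rw [this]
      exact mul_le_mul_of_nonneg_right d5 hFG
    calc N * (m * ∑ i ∈ A, ∑ j ∈ Aᶜ, ((Sf - f i) * (g j - g i))^2)
        ≤ m * (N * (N*SA + SB*G)) := c1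
      _ ≤ m * (N*((m-1)*(N-m+1)*(F*G)) + ((m-2)*(m*(N-m)) + N)*F*G) :=
          mul_le_mul_of_nonneg_left c2 hm0
      _ ≤ (2*N^2*(m-1)^2) * (F*G) := c3
      _ = N * (2*N*(m-1)^2 * (F*G)) := by ring
  have := le_of_mul_le_mul_left hmain hN0
  calc m * ∑ i ∈ A, ∑ j ∈ Aᶜ, ((Sf - f i) * (g j - g i))^2 ≤ 2*N*(m-1)^2 * (F*G) := this
    _ = 2*N*(m-1)^2 * (F*G) := rfl

end GradCovAux

set_option maxHeartbeats 1000000 in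
/-- **Discrete gradient bound for the sample covariance.**
For every `z ∈ G` (encoded as an `n₁`-element subset `A` of `Fin n`, with neighbour
`z^{i,j} = insert j (A.erase i)` for `i ∈ A`, `j ∉ A`),
`∑_{i∈A} ∑_{j∉A} (s_ab(A) − s_ab(A^{i,j}))² ≤ σ²_cov`, where
`σ_cov = sqrt((e_c² n)⁻¹ ∑ (aᵢ−ā)²(bᵢ−b̄)²) + sqrt(8(e_c³ n²)⁻¹ ∑(aᵢ−ā)² ∑(bᵢ−b̄)²)`. -/
theorem grad_sample_cov_bound (n n₁ : ℕ) (hn : 3 ≤ n) (hn₁ : 2 ≤ n₁) (hn₁' : n₁ ≤ n - 1)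
    (a b : Fin n → ℝ) :
    let abar : ℝ := (∑ i, a i) / (n : ℝ)
    let bbar : ℝ := (∑ i, b i) / (n : ℝ)
    let sab : Finset (Fin n) → ℝ := fun A =>
      (1 / ((n₁ : ℝ) - 1)) *
        ∑ i ∈ A, (a i - (∑ k ∈ A, a k) / (n₁ : ℝ)) * (b i - (∑ k ∈ A, b k) / (n₁ : ℝ))
    let ec : ℝ := (n₁ : ℝ) / (n : ℝ)
    let σcov : ℝ :=
      Real.sqrt (1 / (ec ^ 2 * (n : ℝ)) * ∑ i, (a i - abar) ^ 2 * (b i - bbar) ^ 2) +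
        Real.sqrt (8 / (ec ^ 3 * (n : ℝ) ^ 2) *
          ((∑ i, (a i - abar) ^ 2) * ∑ i, (b i - bbar) ^ 2))
    ∀ A ∈ powersetCard n₁ (univ : Finset (Fin n)),
      ∑ i ∈ A, ∑ j ∈ Aᶜ, (sab A - sab (insert j (A.erase i))) ^ 2 ≤ σcov ^ 2 := by
  intro abar bbar sab ec σcov A hA
  have hcardA : A.card = n₁ := by rwa [Finset.mem_powersetCard_univ] at hA
  have hn1n : n₁ + 1 ≤ n := by omega
  have hm2 : (2:ℝ) ≤ (n₁:ℝ) := by exact_mod_cast hn₁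
  have hmpos : (0:ℝ) < (n₁:ℝ) := by linarith
  have hm0 : ((n₁:ℝ)) ≠ 0 := hmpos.ne'
  have hm1pos : (0:ℝ) < (n₁:ℝ) - 1 := by linarith
  have hm1 : ((n₁:ℝ) - 1) ≠ 0 := hm1pos.ne'
  have hN3 : (3:ℝ) ≤ (n:ℝ) := by exact_mod_cast hn
  have hN0 : (0:ℝ) < (n:ℝ) := by linarith
  have hq1 : (1:ℝ) ≤ (n:ℝ) - (n₁:ℝ) := by
    have : ((n₁:ℝ)) + 1 ≤ (n:ℝ) := by exact_mod_cast hn1n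
    linarith
  have hcA : ((A.card):ℝ) = (n₁:ℝ) := by rw [hcardA]
  have hAcle : A.card ≤ n := by
    have := Finset.card_le_card (Finset.subset_univ A); simpa using this
  have hAc : ((Aᶜ.card):ℝ) = (n:ℝ) - (n₁:ℝ) := by
    have h := Finset.card_compl A
    simp only [Fintype.card_fin] at h
    rw [h, Nat.cast_sub hAcle, hcA]
  have habar : abar = (∑ i, a i)/(n:ℝ) := rfl
  have hbbar : bbar = (∑ i, b i)/(n:ℝ) := rfl
  have hec : ec = (n₁:ℝ)/(n:ℝ) := rfl
  set f : Fin n → ℝ := fun i => a i - abar with hf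
  set g : Fin n → ℝ := fun i => b i - bbar with hg
  have hf0 : ∑ i, f i = 0 := by
    simp only [hf]
    rw [Finset.sum_sub_distrib, Finset.sum_const, Finset.card_univ, Fintype.card_fin,
      nsmul_eq_mul, habar]
    field_simp
    ring
  have hg0 : ∑ i, g i = 0 := by
    simp only [hg]
    rw [Finset.sum_sub_distrib, Finset.sum_const, Finset.card_univ, Fintype.card_fin,
      nsmul_eq_mul, hbbar]
    field_simp
    ring
  -- sample covariance in centered form
  have hsab : ∀ B : Finset (Fin n), B.card = n₁ →
      sab B = (1/((n₁:ℝ)-1)) *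
        (∑ k ∈ B, f k * g k - (∑ k ∈ B, f k)*(∑ k ∈ B, g k)/(n₁:ℝ)) := by
    intro B hB
    have hBc : ((B.card):ℝ) = (n₁:ℝ) := by rw [hB]
    have hstep : ∑ i ∈ B, (a i - (∑ k ∈ B, a k)/(n₁:ℝ)) * (b i - (∑ k ∈ B, b k)/(n₁:ℝ))
        = ∑ i ∈ B, (f i - (∑ k ∈ B, f k)/(n₁:ℝ)) * (g i - (∑ k ∈ B, g k)/(n₁:ℝ)) := by
      refine Finset.sum_congr rfl fun i _ => ?_
      rw [center_shift B a abar (n₁:ℝ) hBc hm0 i, center_shift B b bbar (n₁:ℝ) hBc hm0 i]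
    have hdef : sab B = (1/((n₁:ℝ)-1)) *
        ∑ i ∈ B, (a i - (∑ k ∈ B, a k)/(n₁:ℝ)) * (b i - (∑ k ∈ B, b k)/(n₁:ℝ)) := rfl
    rw [hdef, hstep, cov_sum_eq B f g (n₁:ℝ) hBc hm0]
  -- per-pair identity
  have hpair : ∀ i ∈ A, ∀ j ∈ Aᶜ,
      sab A - sab (insert j (A.erase i))
        = (f i * g i - f j * g j)/(n₁:ℝ)
          + ((∑ k ∈ A, f k - f i) * (g j - g i) + (∑ k ∈ A, g k - g i) * (f j - f i))
              /((n₁:ℝ)*((n₁:ℝ)-1)) := by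
    intro i hi j hj
    have hjA : j ∉ A := Finset.mem_compl.mp hj
    have hjne : j ∉ A.erase i := fun h => hjA (Finset.mem_of_mem_erase h)
    have hcard' : (insert j (A.erase i)).card = n₁ := by
      rw [Finset.card_insert_of_notMem hjne, Finset.card_erase_of_mem hi, hcardA]
      omega
    have hsum : ∀ (F : Fin n → ℝ),
        ∑ k ∈ insert j (A.erase i), F k = F j + (∑ k ∈ A, F k - F i) := by
      intro F; rw [Finset.sum_insert hjne, Finset.sum_erase_eq_sub hi]
    rw [hsab A hcardA, hsab _ hcard', hsum f, hsum g, hsum (fun k => f k * g k)]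
    field_simp
    ring
  -- pair functions
  set P : Fin n × Fin n → ℝ := fun p => (f p.1 * g p.1 - f p.2 * g p.2)/(n₁:ℝ) with hP
  set Q1 : Fin n × Fin n → ℝ :=
    fun p => ((∑ k ∈ A, f k - f p.1) * (g p.2 - g p.1))/((n₁:ℝ)*((n₁:ℝ)-1)) with hQ1
  set Q2 : Fin n × Fin n → ℝ :=
    fun p => ((∑ k ∈ A, g k - g p.1) * (f p.2 - f p.1))/((n₁:ℝ)*((n₁:ℝ)-1)) with hQ2
  have hTeq : ∑ i ∈ A, ∑ j ∈ Aᶜ, (sab A - sab (insert j (A.erase i)))^2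
      = ∑ p ∈ A ×ˢ Aᶜ, (P p + (Q1 p + Q2 p))^2 := by
    rw [Finset.sum_product]
    refine Finset.sum_congr rfl fun i hi => Finset.sum_congr rfl fun j hj => ?_
    rw [hpair i hi j hj]
    simp only [hP, hQ1, hQ2]
    ring
  -- target quantities
  have hσ : σcov = Real.sqrt (1 / (ec ^ 2 * (n : ℝ)) * ∑ i, (a i - abar) ^ 2 * (b i - bbar) ^ 2)
      + Real.sqrt (8 / (ec ^ 3 * (n : ℝ) ^ 2) *
          ((∑ i, (a i - abar) ^ 2) * ∑ i, (b i - bbar) ^ 2)) := rfl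
  set X : ℝ := 1 / (ec ^ 2 * (n : ℝ)) * ∑ i, (a i - abar) ^ 2 * (b i - bbar) ^ 2 with hXdef
  set Y : ℝ := 8 / (ec ^ 3 * (n : ℝ) ^ 2) *
      ((∑ i, (a i - abar) ^ 2) * ∑ i, (b i - bbar) ^ 2) with hYdef
  have hXeq : X = (n:ℝ)/(n₁:ℝ)^2 * ∑ i, (f i * g i)^2 := by
    have h1 : ∑ i, (a i - abar) ^ 2 * (b i - bbar) ^ 2 = ∑ i, (f i * g i)^2 := by
      refine Finset.sum_congr rfl fun i _ => ?_
      simp only [hf, hg]; ring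
    rw [hXdef, h1, hec]
    have : 1 / (((n₁:ℝ)/(n:ℝ)) ^ 2 * (n : ℝ)) = (n:ℝ)/(n₁:ℝ)^2 := by
      field_simp
    rw [this]
  have hYeq : Y = 8*(n:ℝ)/(n₁:ℝ)^3 * ((∑ i, f i^2) * ∑ i, g i^2) := by
    have h1 : ∑ i, (a i - abar) ^ 2 = ∑ i, f i^2 := by
      refine Finset.sum_congr rfl fun i _ => ?_; simp only [hf]
    have h2 : ∑ i, (b i - bbar) ^ 2 = ∑ i, g i^2 := by
      refine Finset.sum_congr rfl fun i _ => ?_; simp only [hg]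
    rw [hYdef, h1, h2, hec]
    have : 8 / (((n₁:ℝ)/(n:ℝ)) ^ 3 * (n : ℝ)^2) = 8*(n:ℝ)/(n₁:ℝ)^3 := by
      field_simp
    rw [this]
  have hXnn : 0 ≤ X := by
    rw [hXeq]
    have : (0:ℝ) ≤ ∑ i, (f i * g i)^2 := Finset.sum_nonneg fun i _ => sq_nonneg _
    positivity
  have hYnn : 0 ≤ Y := by
    rw [hYeq]
    have h1 : (0:ℝ) ≤ ∑ i, f i^2 := Finset.sum_nonneg fun i _ => sq_nonneg _
    have h2 : (0:ℝ) ≤ ∑ i, g i^2 := Finset.sum_nonneg fun i _ => sq_nonneg _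
    positivity
  -- bound on the main part
  have hSP : ∑ p ∈ A ×ˢ Aᶜ, P p^2 ≤ X := by
    have e1 : ∑ p ∈ A ×ˢ Aᶜ, P p^2
        = (1/(n₁:ℝ)^2) * ∑ i ∈ A, ∑ j ∈ Aᶜ, ((fun k => f k * g k) i - (fun k => f k * g k) j)^2 := by
      rw [Finset.sum_product, Finset.mul_sum]
      refine Finset.sum_congr rfl fun i _ => ?_
      rw [Finset.mul_sum]
      refine Finset.sum_congr rfl fun j _ => ?_
      simp only [hP]
      field_simp
    have hD : ∑ i ∈ A, ∑ j ∈ Aᶜ, ((fun k => f k * g k) i - (fun k => f k * g k) j)^2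
        ≤ (n:ℝ) * ∑ i, (f i * g i)^2 := by
      rw [pair_sum_expand A Aᶜ (fun k => f k * g k) (fun k => f k * g k)]
      have hsq1 : (∑ i ∈ A, f i * g i)^2 ≤ (A.card : ℝ) * ∑ i ∈ A, (f i * g i)^2 :=
        sq_sum_le_card_mul_sum_sq
      have hsq2 : (∑ j ∈ Aᶜ, f j * g j)^2 ≤ (Aᶜ.card : ℝ) * ∑ j ∈ Aᶜ, (f j * g j)^2 :=
        sq_sum_le_card_mul_sum_sq
      have hsplit : ∑ i ∈ A, (f i * g i)^2 + ∑ i ∈ Aᶜ, (f i * g i)^2 = ∑ i, (f i * g i)^2 :=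
        Finset.sum_add_sum_compl A _
      have hQA : (0:ℝ) ≤ ∑ i ∈ A, (f i * g i)^2 := Finset.sum_nonneg fun i _ => sq_nonneg _
      have hQc : (0:ℝ) ≤ ∑ i ∈ Aᶜ, (f i * g i)^2 := Finset.sum_nonneg fun i _ => sq_nonneg _
      rw [hcA] at hsq1
      rw [hAc] at hsq2
      rw [hcA, hAc]
      have hprod : (∑ i ∈ A, f i * g i)^2*(∑ j ∈ Aᶜ, f j * g j)^2
          ≤ ((n₁:ℝ) * ∑ i ∈ A, (f i * g i)^2) * (((n:ℝ)-(n₁:ℝ)) * ∑ j ∈ Aᶜ, (f j * g j)^2) :=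
        mul_le_mul hsq1 hsq2 (sq_nonneg _) (by positivity)
      have habs : (2*(∑ i ∈ A, f i * g i)*(∑ j ∈ Aᶜ, f j * g j))^2
          ≤ ((n₁:ℝ) * ∑ i ∈ A, (f i * g i)^2 + ((n:ℝ)-(n₁:ℝ)) * ∑ j ∈ Aᶜ, (f j * g j)^2)^2 := by
        nlinarith [hprod, sq_nonneg ((n₁:ℝ) * ∑ i ∈ A, (f i * g i)^2
          - ((n:ℝ)-(n₁:ℝ)) * ∑ j ∈ Aᶜ, (f j * g j)^2)]
      have hv : (0:ℝ) ≤ (n₁:ℝ) * ∑ i ∈ A, (f i * g i)^2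
          + ((n:ℝ)-(n₁:ℝ)) * ∑ j ∈ Aᶜ, (f j * g j)^2 :=
        add_nonneg (mul_nonneg (by linarith) hQA) (mul_nonneg (by linarith) hQc)
      have hkey := (abs_le_of_sq_le_sq' habs hv).1
      rw [← hsplit]
      linarith [hkey]
    rw [e1, hXeq]
    calc (1/(n₁:ℝ)^2) * ∑ i ∈ A, ∑ j ∈ Aᶜ, ((fun k => f k * g k) i - (fun k => f k * g k) j)^2
        ≤ (1/(n₁:ℝ)^2) * ((n:ℝ) * ∑ i, (f i * g i)^2) :=
          mul_le_mul_of_nonneg_left hD (by positivity)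
      _ = (n:ℝ)/(n₁:ℝ)^2 * ∑ i, (f i * g i)^2 := by ring
  -- bounds on the remainder parts
  have haux1 := grad_cov_aux A hcardA f g hf0 hg0 hn₁ hn1n
  have haux2 := grad_cov_aux A hcardA g f hg0 hf0 hn₁ hn1n
  have hQgen : ∀ (u v : Fin n → ℝ),
      ((n₁:ℝ) * ∑ i ∈ A, ∑ j ∈ Aᶜ, ((∑ k ∈ A, u k - u i) * (v j - v i))^2
        ≤ 2*(n:ℝ)*((n₁:ℝ)-1)^2 * ((∑ i, u i^2) * ∑ i, v i^2)) →
      ∑ p ∈ A ×ˢ Aᶜ, (((∑ k ∈ A, u k - u p.1) * (v p.2 - v p.1))/((n₁:ℝ)*((n₁:ℝ)-1)))^2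
        ≤ 2*(n:ℝ)/(n₁:ℝ)^3 * ((∑ i, u i^2) * ∑ i, v i^2) := by
    intro u v haux
    have e1 : ∑ p ∈ A ×ˢ Aᶜ, (((∑ k ∈ A, u k - u p.1) * (v p.2 - v p.1))/((n₁:ℝ)*((n₁:ℝ)-1)))^2
        = (1/((n₁:ℝ)*((n₁:ℝ)-1))^2)
            * ∑ i ∈ A, ∑ j ∈ Aᶜ, ((∑ k ∈ A, u k - u i) * (v j - v i))^2 := by
      rw [Finset.sum_product, Finset.mul_sum]
      refine Finset.sum_congr rfl fun i _ => ?_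
      rw [Finset.mul_sum]
      refine Finset.sum_congr rfl fun j _ => ?_
      field_simp
    have hDS : ∑ i ∈ A, ∑ j ∈ Aᶜ, ((∑ k ∈ A, u k - u i) * (v j - v i))^2
        ≤ 2*(n:ℝ)*((n₁:ℝ)-1)^2 * ((∑ i, u i^2) * ∑ i, v i^2) / (n₁:ℝ) := by
      rw [le_div_iff₀ hmpos]
      calc (∑ i ∈ A, ∑ j ∈ Aᶜ, ((∑ k ∈ A, u k - u i) * (v j - v i))^2) * (n₁:ℝ)
          = (n₁:ℝ) * ∑ i ∈ A, ∑ j ∈ Aᶜ, ((∑ k ∈ A, u k - u i) * (v j - v i))^2 := by ring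
        _ ≤ 2*(n:ℝ)*((n₁:ℝ)-1)^2 * ((∑ i, u i^2) * ∑ i, v i^2) := haux
    rw [e1]
    calc (1/((n₁:ℝ)*((n₁:ℝ)-1))^2)
            * ∑ i ∈ A, ∑ j ∈ Aᶜ, ((∑ k ∈ A, u k - u i) * (v j - v i))^2
        ≤ (1/((n₁:ℝ)*((n₁:ℝ)-1))^2)
            * (2*(n:ℝ)*((n₁:ℝ)-1)^2 * ((∑ i, u i^2) * ∑ i, v i^2) / (n₁:ℝ)) :=
          mul_le_mul_of_nonneg_left hDS (by positivity)
      _ = 2*(n:ℝ)/(n₁:ℝ)^3 * ((∑ i, u i^2) * ∑ i, v i^2) := by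
          field_simp
  have hSQ1 : ∑ p ∈ A ×ˢ Aᶜ, Q1 p^2 ≤ Y/4 := by
    have := hQgen f g haux1
    rw [hYeq]
    calc ∑ p ∈ A ×ˢ Aᶜ, Q1 p^2
        ≤ 2*(n:ℝ)/(n₁:ℝ)^3 * ((∑ i, f i^2) * ∑ i, g i^2) := this
      _ = 8*(n:ℝ)/(n₁:ℝ)^3 * ((∑ i, f i^2) * ∑ i, g i^2) / 4 := by ring
  have hSQ2 : ∑ p ∈ A ×ˢ Aᶜ, Q2 p^2 ≤ Y/4 := by
    have := hQgen g f haux2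
    rw [hYeq]
    calc ∑ p ∈ A ×ˢ Aᶜ, Q2 p^2
        ≤ 2*(n:ℝ)/(n₁:ℝ)^3 * ((∑ i, g i^2) * ∑ i, f i^2) := this
      _ = 8*(n:ℝ)/(n₁:ℝ)^3 * ((∑ i, f i^2) * ∑ i, g i^2) / 4 := by ring
  -- assemble with Minkowski
  have M1 : ∑ p ∈ A ×ˢ Aᶜ, (P p + (Q1 p + Q2 p))^2
      ≤ (Real.sqrt (∑ p ∈ A ×ˢ Aᶜ, P p^2)
          + Real.sqrt (∑ p ∈ A ×ˢ Aᶜ, (Q1 p + Q2 p)^2))^2 := by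
    have := minkowski_sq (A ×ˢ Aᶜ) P (fun p => Q1 p + Q2 p)
    simpa using this
  have M2 : ∑ p ∈ A ×ˢ Aᶜ, (Q1 p + Q2 p)^2
      ≤ (Real.sqrt (∑ p ∈ A ×ˢ Aᶜ, Q1 p^2) + Real.sqrt (∑ p ∈ A ×ˢ Aᶜ, Q2 p^2))^2 := by
    have := minkowski_sq (A ×ˢ Aᶜ) Q1 Q2
    simpa using this
  have hsqY4 : Real.sqrt (Y/4) = Real.sqrt Y / 2 := by
    rw [show Y/4 = (Real.sqrt Y/2)^2 from by rw [div_pow, Real.sq_sqrt hYnn]; norm_num]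
    exact Real.sqrt_sq (by positivity)
  have h2 : Real.sqrt (∑ p ∈ A ×ˢ Aᶜ, (Q1 p + Q2 p)^2) ≤ Real.sqrt Y := by
    have hs12 : (0:ℝ) ≤ Real.sqrt (∑ p ∈ A ×ˢ Aᶜ, Q1 p^2)
        + Real.sqrt (∑ p ∈ A ×ˢ Aᶜ, Q2 p^2) :=
      add_nonneg (Real.sqrt_nonneg _) (Real.sqrt_nonneg _)
    calc Real.sqrt (∑ p ∈ A ×ˢ Aᶜ, (Q1 p + Q2 p)^2)
        ≤ Real.sqrt ((Real.sqrt (∑ p ∈ A ×ˢ Aᶜ, Q1 p^2)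
            + Real.sqrt (∑ p ∈ A ×ˢ Aᶜ, Q2 p^2))^2) := Real.sqrt_le_sqrt M2
      _ = Real.sqrt (∑ p ∈ A ×ˢ Aᶜ, Q1 p^2) + Real.sqrt (∑ p ∈ A ×ˢ Aᶜ, Q2 p^2) :=
          Real.sqrt_sq hs12
      _ ≤ Real.sqrt (Y/4) + Real.sqrt (Y/4) :=
          add_le_add (Real.sqrt_le_sqrt hSQ1) (Real.sqrt_le_sqrt hSQ2)
      _ = Real.sqrt Y := by rw [hsqY4]; ring
  have h1 : Real.sqrt (∑ p ∈ A ×ˢ Aᶜ, P p^2) ≤ Real.sqrt X := Real.sqrt_le_sqrt hSP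
  calc ∑ i ∈ A, ∑ j ∈ Aᶜ, (sab A - sab (insert j (A.erase i)))^2
      = ∑ p ∈ A ×ˢ Aᶜ, (P p + (Q1 p + Q2 p))^2 := hTeq
    _ ≤ (Real.sqrt (∑ p ∈ A ×ˢ Aᶜ, P p^2)
          + Real.sqrt (∑ p ∈ A ×ˢ Aᶜ, (Q1 p + Q2 p)^2))^2 := M1
    _ ≤ (Real.sqrt X + Real.sqrt Y)^2 := by
        have hnn : (0:ℝ) ≤ Real.sqrt (∑ p ∈ A ×ˢ Aᶜ, P p^2)
            + Real.sqrt (∑ p ∈ A ×ˢ Aᶜ, (Q1 p + Q2 p)^2) :=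
          add_nonneg (Real.sqrt_nonneg _) (Real.sqrt_nonneg _)
        exact pow_le_pow_left₀ hnn (add_le_add h1 h2) 2
    _ = σcov^2 := by rw [hσ]
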